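/- Let 𝔤 be a complex filiform Lie algebra of dimension n ≥ 2. Then for every integer k ≥ 2 one has the equality of bracket ideals [C^k𝔤, C^k𝔤] = [C^k𝔤, C^{k+1}𝔤]; in particular dim[C^k𝔤,C^k𝔤] = dim[C^{k+1}𝔤,C^k𝔤] = dim[C^k𝔤,C^{k+1}𝔤]. -/

import Mathlib

open Module

variable (L : Type) [LieRing L] [LieAlgebra ℂ L]

/-- `C L k` is the `k`-th term of the lower central series of `L`,
with the convention `C L 1 = L`. -/
def C (k : ℕ) : LieIdeal ℂ L := LieModule.lowerCentralSeries ℂ L L (k - 1)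

/-- `L` is a filiform Lie algebra of dimension `n`. -/
def IsFiliform (n : ℕ) : Prop :=
  2 ≤ n ∧ FiniteDimensional ℂ L ∧ finrank ℂ L = n ∧
    ∀ k, 2 ≤ k → k ≤ n → finrank ℂ (C L k) = n - k

/-- `e 1, …, e n` is an adapted basis of `L`. -/
def IsAdaptedBasis (n : ℕ) (e : ℕ → L) : Prop :=
  (∃ b : Basis (Fin n) ℂ L, ∀ i : Fin n, b i = e (i.1 + 1)) ∧
  (∀ h, 3 ≤ h → h ≤ n → ⁅e 1, e h⁆ = e (h - 1)) ∧
  (∀ h, 1 ≤ h → h ≤ n → ⁅e 2, e h⁆ = 0) ∧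
  (∀ h, 2 ≤ h → h ≤ n → ⁅e 3, e h⁆ = 0)

/-- `L` is (isomorphic to) the model filiform Lie algebra of dimension `n`,
i.e. it admits a basis whose only nonzero brackets are `⁅e 1, e h⁆ = e (h-1)`. -/
def IsModel (n : ℕ) : Prop :=
  ∃ e : ℕ → L,
    (∃ b : Basis (Fin n) ℂ L, ∀ i : Fin n, b i = e (i.1 + 1)) ∧
    (∀ h, 3 ≤ h → h ≤ n → ⁅e 1, e h⁆ = e (h - 1)) ∧
    ⁅e 1, e 2⁆ = 0 ∧
    (∀ i j, 2 ≤ i → i < j → j ≤ n → ⁅e i, e j⁆ = 0)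

/-- `L` is a non-model filiform Lie algebra with associated triple `(z₁, z₂, n)`. -/
def HasTriple (z₁ z₂ n : ℕ) : Prop :=
  IsFiliform L n ∧ ¬ IsModel L n ∧
  ∀ e : ℕ → L, IsAdaptedBasis L n e →
    IsLeast {k | 4 ≤ k ∧ ⁅e k, e n⁆ ≠ 0} z₁ ∧
    IsLeast {k | 4 ≤ k ∧ ⁅e k, e (k + 1)⁆ ≠ 0} z₂

/-- `θ_k(L)`: the least `ℓ ≥ 1` with `⁅C^k L, C^ℓ L⁆ = 0`. -/
noncomputable def theta (k : ℕ) : ℕ := sInf {ℓ | 1 ≤ ℓ ∧ ⁅C L k, C L ℓ⁆ = ⊥}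

/-- `P h u` is the `h`-th coordinate of `u` in the basis `e 1, …, e n` (and `0` for
`h` outside `{1, …, n}`). -/
def IsCoords (n : ℕ) (e : ℕ → L) (P : ℕ → L → ℂ) : Prop :=
  (∀ u : L, u = ∑ h ∈ Finset.Icc 1 n, P h u • e h) ∧
  (∀ u : L, ∀ h, h ∉ Finset.Icc 1 n → P h u = 0)

/-- `(α, γ, β)` is a family of parameters associated with `L` (with triple `(z₁, z₂, n)`)
with respect to the adapted basis `e` with coordinate functions `P`. -/
def IsAssocParams (z₁ z₂ n : ℕ) (e : ℕ → L) (P : ℕ → L → ℂ)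
    (α γ : ℕ → ℂ) (β : ℕ → ℕ → ℂ) : Prop :=
  (∀ i, i ≤ z₂ - z₁ →
    ⁅e (z₁ + i), e (z₂ + 1)⁆ = ∑ m ∈ Finset.Icc 1 (i + 1), α m • e (i + 3 - m)) ∧
  (∀ j, 2 ≤ j → j ≤ n - z₂ →
    ⁅e z₁, e (z₂ + j)⁆ =
      α 1 • e (j + 1) + ∑ m ∈ Finset.Icc 1 (j - 1), γ m • e (j + 1 - m)) ∧
  (∀ k ℓ, 2 ≤ ℓ → ℓ ≤ n - z₂ → 1 ≤ k → k < z₂ - z₁ + ℓ →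
    ⁅e (z₁ + k), e (z₂ + ℓ)⁆ =
      (∑ h ∈ Finset.Icc 2 (k + ℓ),
        P h (⁅e (z₁ + k - 1), e (z₂ + ℓ)⁆ + ⁅e (z₁ + k), e (z₂ + ℓ - 1)⁆) • e (h + 1))
      + β k ℓ • e 2)

section Aux

variable {L}

/-- If `I` is spanned by a single element `x` together with a subideal `J`,
then `⁅I, I⁆ = ⁅I, J⁆` (using `⁅x, x⁆ = 0`). -/
lemma key_bracket {I J : LieIdeal ℂ L} (hJI : J ≤ I) (x : L) (hx : x ∈ I)
    (hspan : (I : Submodule ℂ L) ≤ Submodule.span ℂ {x} ⊔ (J : Submodule ℂ L)) :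
    (⁅I, I⁆ : LieIdeal ℂ L) = ⁅I, J⁆ := by
  refine le_antisymm ?_ (LieSubmodule.mono_lie_right _ hJI)
  rw [LieSubmodule.lie_le_iff]
  intro a ha b hb
  obtain ⟨y, hy, z, hz, hab⟩ := Submodule.mem_sup.mp (hspan ha)
  obtain ⟨s, rfl⟩ := Submodule.mem_span_singleton.mp hy
  obtain ⟨y', hy', w, hw, hbb⟩ := Submodule.mem_sup.mp (hspan hb)
  obtain ⟨t, rfl⟩ := Submodule.mem_span_singleton.mp hy'
  have hzJ : z ∈ J := hz
  have hwJ : w ∈ J := hw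
  have h1 : ⁅x, w⁆ ∈ (⁅I, J⁆ : LieIdeal ℂ L) := LieSubmodule.lie_mem_lie hx hwJ
  have h2 : ⁅x, z⁆ ∈ (⁅I, J⁆ : LieIdeal ℂ L) := LieSubmodule.lie_mem_lie hx hzJ
  have h3 : ⁅z, w⁆ ∈ (⁅I, J⁆ : LieIdeal ℂ L) := LieSubmodule.lie_mem_lie (hJI hzJ) hwJ
  have hcalc : ⁅a, b⁆ = s • ⁅x, w⁆ + (t • (-⁅x, z⁆) + ⁅z, w⁆) := by
    rw [← hab, ← hbb]
    simp [add_lie, lie_add, smul_lie, lie_smul, lie_self, lie_skew x z]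
    abel
  rw [hcalc]
  exact add_mem (SMulMemClass.smul_mem _ h1) (add_mem (SMulMemClass.smul_mem _ (neg_mem h2)) h3)

end Aux

/-- For a complex filiform Lie algebra `L` of dimension `n ≥ 2` and every `k ≥ 2`,
`⁅C^k L, C^k L⁆ = ⁅C^k L, C^(k+1) L⁆`; in particular the three dimensions coincide. -/
theorem statement0 (n : ℕ) (hfil : IsFiliform L n) (k : ℕ) (hk : 2 ≤ k) :
    (⁅C L k, C L k⁆ : LieIdeal ℂ L) = ⁅C L k, C L (k + 1)⁆ ∧
    finrank ℂ (⁅C L k, C L k⁆ : LieIdeal ℂ L) =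
      finrank ℂ (⁅C L (k + 1), C L k⁆ : LieIdeal ℂ L) ∧
    finrank ℂ (⁅C L k, C L k⁆ : LieIdeal ℂ L) =
      finrank ℂ (⁅C L k, C L (k + 1)⁆ : LieIdeal ℂ L) := by
  obtain ⟨hn2, hFD, hdimL, hranks⟩ := hfil
  suffices h : (⁅C L k, C L k⁆ : LieIdeal ℂ L) = ⁅C L k, C L (k + 1)⁆ by
    exact ⟨h, by rw [h, LieSubmodule.lie_comm (C L k) (C L (k+1))], by rw [h]⟩
  by_cases hkn : k + 1 ≤ n
  · -- codimension one case
    have hle : C L (k + 1) ≤ C L k := by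
      unfold C
      exact LieModule.antitone_lowerCentralSeries ℂ L L (by omega)
    have hdk : finrank ℂ (C L k) = n - k := hranks k hk (by omega)
    have hdk1 : finrank ℂ (C L (k + 1)) = n - (k + 1) := hranks (k + 1) (by omega) hkn
    have hne : C L (k + 1) ≠ C L k := by
      intro h; rw [h, hdk] at hdk1; omega
    obtain ⟨x, hxI, hxJ⟩ := SetLike.exists_of_lt (lt_of_le_of_ne hle hne)
    refine key_bracket hle x hxI ?_
    set K : Submodule ℂ L := Submodule.span ℂ {x} ⊔ (C L (k + 1) : Submodule ℂ L) with hKdef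
    have hKI : K ≤ (C L k : Submodule ℂ L) := by
      apply sup_le
      · rw [Submodule.span_le, Set.singleton_subset_iff]; exact hxI
      · exact (LieSubmodule.toSubmodule_le_toSubmodule _ _).mpr hle
    have hJK : ((C L (k + 1) : LieIdeal ℂ L) : Submodule ℂ L) < K := by
      refine lt_of_le_of_ne le_sup_right fun h => hxJ ?_
      have hxK : x ∈ K := Submodule.mem_sup_left (Submodule.mem_span_singleton_self x)
      rw [← h] at hxK; exact hxK
    have h1 : finrank ℂ ((C L (k + 1) : LieIdeal ℂ L) : Submodule ℂ L) < finrank ℂ K :=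
      Submodule.finrank_lt_finrank_of_lt hJK
    have hd1 : finrank ℂ ((C L (k + 1) : LieIdeal ℂ L) : Submodule ℂ L) = n - (k + 1) := hdk1
    have hd0 : finrank ℂ ((C L k : LieIdeal ℂ L) : Submodule ℂ L) = n - k := hdk
    have hnlt : ¬ K < (C L k : Submodule ℂ L) := by
      intro hlt
      have h2 : finrank ℂ K < finrank ℂ ((C L k : LieIdeal ℂ L) : Submodule ℂ L) :=
        Submodule.finrank_lt_finrank_of_lt hlt
      omega
    have heq : K = (C L k : Submodule ℂ L) := by
      rcases lt_or_eq_of_le hKI with h | h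
      · exact absurd h hnlt
      · exact h
    exact heq.ge
  · -- degenerate case: C L k = ⊥
    have hdn : finrank ℂ (C L n) = 0 := by rw [hranks n hn2 le_rfl]; omega
    have hbotn : C L n = ⊥ := by
      rw [← LieSubmodule.toSubmodule_eq_bot]
      exact Submodule.finrank_eq_zero.mp hdn
    have hle : C L k ≤ C L n := by
      unfold C
      exact LieModule.antitone_lowerCentralSeries ℂ L L (by omega)
    have hbot : C L k = ⊥ := le_bot_iff.mp (hbotn ▸ hle)
    rw [hbot, LieSubmodule.bot_lie, LieSubmodule.bot_lie]
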